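/- For Model 1 in dimension d = 1 with i.i.d. N(0,1) weights: given ε > 0, there is a constant c(ε) > 0 so that for all N sufficiently large, P(Z_{2^N} ≤ (μ − ε)2^N) ≥ (1/2)·e^{−c(ε)2^{2N}/N}. -/

import Mathlib

/-!
Model 1 (directed last passage percolation, d = 1).  Edges are indexed by
`(x, m, b) : ℤ × ℕ × Bool`, representing the directed edge from the vertex
`(x, m)` to `(x + (if b then 1 else -1), m + 1)`.
-/

open MeasureTheory ProbabilityTheory Filter

namespace Stmt13

/-- Position of a directed path after `k` steps, starting at `x`,
with step signs `s`. -/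
def pos (x : ℤ) (s : ℕ → Bool) : ℕ → ℤ
  | 0 => x
  | k + 1 => pos x s k + (if s k then 1 else -1)

/-- Value `V(γ)` of the directed path starting at `(x, m)`, taking `n` steps
according to `s`, in the edge-weight realization `Y`. -/
noncomputable def pathVal (Y : ℤ × ℕ × Bool → ℝ) (x : ℤ) (m : ℕ) (s : ℕ → Bool) (n : ℕ) : ℝ :=
  ∑ k ∈ Finset.range n, Y (pos x s k, m + k, s k)

/-- Last passage time `Z_n` from the origin to level `n`. -/
noncomputable def Z (Y : ℤ × ℕ × Bool → ℝ) (n : ℕ) : ℝ :=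
  ⨆ s : ℕ → Bool, pathVal Y 0 0 s n

end Stmt13

open Stmt13

open scoped NNReal ENNReal

namespace Stmt13Aux
open Stmt13



lemma pos_natAbs (s : ℕ → Bool) : ∀ k, (pos 0 s k).natAbs ≤ k := by
  intro k
  induction k with
  | zero => simp [pos]
  | succ k ih =>
    show (pos 0 s k + (if s k then 1 else -1)).natAbs ≤ k + 1
    refine le_trans (Int.natAbs_add_le _ _) ?_
    have : (if s k then (1:ℤ) else -1).natAbs = 1 := by by_cases h : s k <;> simp [h]
    omega

lemma pos_congr {s s' : ℕ → Bool} {n : ℕ} (h : ∀ k < n, s k = s' k) :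
    ∀ k, k ≤ n → pos 0 s k = pos 0 s' k := by
  intro k
  induction k with
  | zero => intro _; rfl
  | succ k ih =>
    intro hk
    show pos 0 s k + _ = pos 0 s' k + _
    rw [ih (by omega), h k (by omega)]

lemma pathVal_congr {Y : ℤ × ℕ × Bool → ℝ} {s s' : ℕ → Bool} {n : ℕ}
    (h : ∀ k < n, s k = s' k) : pathVal Y 0 0 s n = pathVal Y 0 0 s' n := by
  refine Finset.sum_congr rfl fun k hk => ?_
  rw [Finset.mem_range] at hk
  rw [pos_congr h k hk.le, h k hk]

/-- extend a finite sign sequence by `false`. -/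
def extb (n : ℕ) (t : Fin n → Bool) : ℕ → Bool := fun k => if h : k < n then t ⟨k, h⟩ else false

lemma extb_lt {n : ℕ} (t : Fin n → Bool) {k : ℕ} (hk : k < n) : extb n t k = t ⟨k, hk⟩ := dif_pos hk

lemma Z_eq_sup' (Y : ℤ × ℕ × Bool → ℝ) (n : ℕ) :
    Z Y n = Finset.univ.sup' Finset.univ_nonempty
      (fun t : Fin n → Bool => pathVal Y 0 0 (extb n t) n) := by
  have key : ∀ s : ℕ → Bool,
      pathVal Y 0 0 s n = pathVal Y 0 0 (extb n (fun i => s i)) n := by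
    intro s
    refine pathVal_congr fun k hk => ?_
    rw [extb_lt _ hk]
  have hsub : Set.range (fun s : ℕ → Bool => pathVal Y 0 0 s n) ⊆
      Set.range (fun t : Fin n → Bool => pathVal Y 0 0 (extb n t) n) := by
    rintro _ ⟨s, rfl⟩
    exact ⟨fun i => s i, (key s).symm⟩
  refine le_antisymm ?_ ?_
  · refine ciSup_le fun s => ?_
    rw [key s]
    exact Finset.le_sup' (fun t : Fin n → Bool => pathVal Y 0 0 (extb n t) n)
      (Finset.mem_univ _)
  · refine Finset.sup'_le _ _ fun t _ => ?_
    exact le_ciSup (((Set.finite_range _).bddAbove).mono hsub) (extb n t)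

/-- the tilting field. -/
noncomputable def w (n : ℕ) (lam : ℝ) : ℤ × ℕ × Bool → ℝ := fun e =>
  if e.2.1 < n ∧ e.1.natAbs ≤ e.2.1 then lam / (e.2.1 + 1) else 0

lemma pathVal_add_w (Y : ℤ × ℕ × Bool → ℝ) (n : ℕ) (lam : ℝ) (s : ℕ → Bool) :
    pathVal (fun e => Y e + w n lam e) 0 0 s n
      = pathVal Y 0 0 s n + ∑ k ∈ Finset.range n, lam / (k + 1) := by
  unfold pathVal
  rw [← Finset.sum_add_distrib]
  refine Finset.sum_congr rfl fun k hk => ?_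
  rw [Finset.mem_range] at hk
  have hw : w n lam (pos 0 s k, 0 + k, s k) = lam / (k + 1) := by
    have := pos_natAbs s k
    simp only [w, zero_add]
    rw [if_pos ⟨hk, this⟩]
  show Y (pos 0 s k, 0 + k, s k) + w n lam (pos 0 s k, 0 + k, s k) = _
  rw [hw]

lemma Z_add_w (Y : ℤ × ℕ × Bool → ℝ) (n : ℕ) (lam : ℝ) :
    Z (fun e => Y e + w n lam e) n = Z Y n + ∑ k ∈ Finset.range n, lam / (k + 1) := by
  rw [Z_eq_sup', Z_eq_sup' Y n]
  rw [Finset.comp_sup'_eq_sup'_comp (γ := ℝ) _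
    (fun x => x + ∑ k ∈ Finset.range n, lam / (k + 1)) (fun x y => (max_add_add_right x y _).symm)]
  exact Finset.sup'_congr _ rfl fun t _ => pathVal_add_w Y n lam (extb n t)

lemma Z_congr {Y Y' : ℤ × ℕ × Bool → ℝ} {n : ℕ}
    (h : ∀ e : ℤ × ℕ × Bool, e.2.1 < n → e.1.natAbs ≤ e.2.1 → Y e = Y' e) :
    Z Y n = Z Y' n := by
  rw [Z_eq_sup', Z_eq_sup']
  refine Finset.sup'_congr _ rfl fun t _ => ?_
  refine Finset.sum_congr rfl fun k hk => ?_
  rw [Finset.mem_range] at hk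
  simp only [zero_add]
  exact h (pos 0 (extb n t) k, k, extb n t k) hk (pos_natAbs _ k)

lemma measurable_Z {α : Type*} [MeasurableSpace α] (Y : α → ℤ × ℕ × Bool → ℝ)
    (h : ∀ e, Measurable fun a => Y a e) (n : ℕ) :
    Measurable fun a => Z (Y a) n := by
  have : (fun a => Z (Y a) n) = Finset.univ.sup' Finset.univ_nonempty
      (fun (t : Fin n → Bool) (a : α) => pathVal (Y a) 0 0 (extb n t) n) := by
    funext a
    rw [Z_eq_sup', Finset.sup'_apply]
  rw [this]
  refine Finset.measurable_sup' _ fun t _ => ?_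
  unfold pathVal
  exact Finset.measurable_sum _ fun k _ => h _



lemma pi_map_coord {ι : Type*} [Fintype ι] (μ : ι → Measure ℝ) [∀ i, IsProbabilityMeasure (μ i)]
    (g : ι → ℝ → ℝ) (hg : ∀ i, Measurable (g i)) :
    Measure.map (fun (z : ι → ℝ) i => g i (z i)) (Measure.pi μ)
      = Measure.pi (fun i => Measure.map (g i) (μ i)) := by
  have hT : Measurable (fun (z : ι → ℝ) i => g i (z i)) :=
    measurable_pi_lambda _ fun i => (hg i).comp (measurable_pi_apply i)
  haveI : ∀ i, IsProbabilityMeasure (Measure.map (g i) (μ i)) :=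
    fun i => Measure.isProbabilityMeasure_map (hg i).aemeasurable
  refine (Measure.pi_eq fun s hs => ?_).symm
  rw [Measure.map_apply hT (MeasurableSet.univ_pi fun i => hs i)]
  have hpre : (fun (z : ι → ℝ) i => g i (z i)) ⁻¹' Set.pi Set.univ s
      = Set.pi Set.univ (fun i => g i ⁻¹' s i) := by
    ext z; simp [Set.mem_pi]
  rw [hpre, Measure.pi_pi]
  exact Finset.prod_congr rfl fun i _ => (Measure.map_apply (hg i) (hs i)).symm

lemma gaussianReal_shift (c : ℝ) :
    gaussianReal c 1 = (gaussianReal 0 1).withDensity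
      (fun x => ENNReal.ofReal (Real.exp (c * x - c ^ 2 / 2))) := by
  rw [gaussianReal_of_var_ne_zero c one_ne_zero, gaussianReal_of_var_ne_zero 0 one_ne_zero,
    ← withDensity_mul _ (measurable_gaussianPDF 0 1)
      (by fun_prop : Measurable fun x : ℝ => ENNReal.ofReal (Real.exp (c * x - c ^ 2 / 2)))]
  congr 1
  funext x
  show ENNReal.ofReal (gaussianPDFReal c 1 x)
    = ENNReal.ofReal (gaussianPDFReal 0 1 x) * ENNReal.ofReal (Real.exp (c * x - c ^ 2 / 2))
  rw [← ENNReal.ofReal_mul (gaussianPDFReal_nonneg _ _ _)]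
  congr 1
  unfold gaussianPDFReal
  rw [show (-(x - c) ^ 2 / (2 * ((1:ℝ≥0):ℝ))) = (-(x - 0) ^ 2 / (2 * ((1:ℝ≥0):ℝ)))
    + (c * x - c ^ 2 / 2) by push_cast; ring, Real.exp_add]
  ring



lemma pi_withDensity {ι : Type*} [Fintype ι] (μ : Measure ℝ) [IsProbabilityMeasure μ]
    (f : ι → ℝ → ℝ) (hm : ∀ i, Measurable (f i)) (h0 : ∀ i x, 0 ≤ f i x)
    (hint : ∀ i, Integrable (f i) μ) :
    Measure.pi (fun i => μ.withDensity fun x => ENNReal.ofReal (f i x))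
      = (Measure.pi fun _ : ι => μ).withDensity
        (fun z => ENNReal.ofReal (∏ i, f i (z i))) := by
  haveI : ∀ i, IsFiniteMeasure (μ.withDensity fun x => ENNReal.ofReal (f i x)) := by
    intro i
    refine isFiniteMeasure_withDensity ?_
    rw [← ofReal_integral_eq_lintegral_ofReal (hint i) (ae_of_all _ (h0 i))]
    exact ENNReal.ofReal_ne_top
  refine Measure.pi_eq fun s hs => ?_
  set F : ι → ℝ → ℝ := fun i => Set.indicator (s i) (f i) with hF
  have hFint : ∀ i, Integrable (F i) μ := fun i => (hint i).indicator (hs i)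
  have hF0 : ∀ i x, 0 ≤ F i x := fun i x => Set.indicator_nonneg (fun y _ => h0 i y) x
  have hFm : ∀ i, Measurable (F i) := fun i => (hm i).indicator (hs i)
  -- step 1 : LHS as a lintegral of an indicator-free product
  have hind : (Set.pi Set.univ s).indicator (fun z : ι → ℝ => ENNReal.ofReal (∏ i, f i (z i)))
      = fun z => ENNReal.ofReal (∏ i, F i (z i)) := by
    funext z
    by_cases hz : z ∈ Set.pi Set.univ s
    · rw [Set.indicator_of_mem hz]
      congr 1
      exact Finset.prod_congr rfl fun i _ =>
        (Set.indicator_of_mem (hz i (Set.mem_univ i)) _).symm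
    · rw [Set.indicator_of_notMem hz]
      have : ∃ i, z i ∉ s i := by simpa [Set.mem_pi] using hz
      obtain ⟨i, hi⟩ := this
      rw [Finset.prod_eq_zero (Finset.mem_univ i) (Set.indicator_of_notMem hi _),
        ENNReal.ofReal_zero]
  -- step 2 : integrability and factorization on the product space
  have hpi_int : Integrable (fun z : ι → ℝ => ∏ i, F i (z i)) (Measure.pi fun _ : ι => μ) := by
    letI : MeasureSpace ℝ := { toMeasurableSpace := Real.measurableSpace, volume := μ }
    haveI : SigmaFinite (volume : Measure ℝ) := inferInstanceAs (SigmaFinite μ)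
    have := Integrable.fintype_prod (𝕜 := ℝ) (f := F) hFint
    exact this
  have hpi_eq : ∫ z : ι → ℝ, ∏ i, F i (z i) ∂(Measure.pi fun _ : ι => μ)
      = ∏ i, ∫ x, F i x ∂μ := by
    letI : MeasureSpace ℝ := { toMeasurableSpace := Real.measurableSpace, volume := μ }
    haveI : SigmaFinite (volume : Measure ℝ) := inferInstanceAs (SigmaFinite μ)
    have := MeasureTheory.integral_fintype_prod_eq_prod (𝕜 := ℝ) F (μ := fun _ => μ)
    exact this
  calc ((Measure.pi fun _ : ι => μ).withDensity
        (fun z => ENNReal.ofReal (∏ i, f i (z i)))) (Set.pi Set.univ s)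
      = ∫⁻ z in Set.pi Set.univ s, ENNReal.ofReal (∏ i, f i (z i))
          ∂(Measure.pi fun _ : ι => μ) := by
        rw [withDensity_apply _ (MeasurableSet.univ_pi hs)]
    _ = ∫⁻ z, ENNReal.ofReal (∏ i, F i (z i)) ∂(Measure.pi fun _ : ι => μ) := by
        rw [← lintegral_indicator (MeasurableSet.univ_pi hs), hind]
    _ = ENNReal.ofReal (∫ z : ι → ℝ, ∏ i, F i (z i) ∂(Measure.pi fun _ : ι => μ)) := by
        rw [ofReal_integral_eq_lintegral_ofReal hpi_int
          (ae_of_all _ fun z => Finset.prod_nonneg fun i _ => hF0 i (z i))]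
    _ = ∏ i, ENNReal.ofReal (∫ x, F i x ∂μ) := by
        rw [hpi_eq, ENNReal.ofReal_prod_of_nonneg fun i _ => integral_nonneg (hF0 i)]
    _ = ∏ i, (μ.withDensity fun x => ENNReal.ofReal (f i x)) (s i) := by
        refine Finset.prod_congr rfl fun i _ => ?_
        rw [withDensity_apply _ (hs i), hF, integral_indicator (hs i),
          ofReal_integral_eq_lintegral_ofReal ((hint i).restrict)
            (ae_of_all _ fun x => h0 i x)]



lemma map_pi_of_iIndep {Ω : Type} [MeasurableSpace Ω] (P : Measure Ω) [IsProbabilityMeasure P]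
    {κ : Type*} (X : κ → Ω → ℝ) (hmeas : ∀ e, Measurable (X e))
    (hindep : iIndepFun X P)
    (hdist : ∀ e, Measure.map (X e) P = gaussianReal 0 1) (S : Finset κ) :
    Measure.map (fun ω (i : S) => X i ω) P = Measure.pi fun _ : S => gaussianReal 0 1 := by
  have hT : Measurable fun ω (i : S) => X i ω := measurable_pi_lambda _ fun i => hmeas i
  refine (Measure.pi_eq fun s hs => ?_).symm
  rw [Measure.map_apply hT (.univ_pi hs)]
  classical
  set sets : κ → Set ℝ := fun e => if h : e ∈ S then s ⟨e, h⟩ else Set.univ with hsets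
  have hsetsm : ∀ e, e ∈ S → MeasurableSet (sets e) := by
    intro e he
    simp only [hsets, dif_pos he]
    exact hs _
  have hpre : (fun ω (i : S) => X i ω) ⁻¹' Set.pi Set.univ s = ⋂ e ∈ S, X e ⁻¹' sets e := by
    ext ω
    simp only [Set.mem_preimage, Set.mem_pi, Set.mem_univ, forall_true_left, Set.mem_iInter]
    constructor
    · intro h e he
      simp only [hsets, dif_pos he]
      exact h ⟨e, he⟩
    · intro h i
      have := h i.1 i.2
      simpa only [hsets, dif_pos i.2] using this
  rw [hpre, hindep.measure_inter_preimage_eq_mul S hsetsm]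
  rw [← Finset.prod_coe_sort S (fun e => P (X e ⁻¹' sets e))]
  refine Finset.prod_congr rfl fun i _ => ?_
  rw [← Measure.map_apply (hmeas i) (hsetsm i i.2), hdist i]
  congr 1
  simp only [hsets, dif_pos i.2]




lemma measurable_wsum {ι : Type*} [Fintype ι] (w : ι → ℝ) :
    Measurable fun z : ι → ℝ => ∑ i, w i * z i :=
  Finset.measurable_sum _ fun i _ => measurable_const.mul (measurable_pi_apply i)

lemma pi_gauss_neg_le_half {ι : Type*} [Fintype ι] (w : ι → ℝ) :
    (Measure.pi fun _ : ι => gaussianReal 0 1) {z | ∑ i, w i * z i < 0} ≤ 1 / 2 := by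
  set π := Measure.pi fun _ : ι => gaussianReal 0 1 with hπ
  have hneg : Measure.map (fun (z : ι → ℝ) i => (-1 : ℝ) * z i) π = π := by
    rw [hπ, pi_map_coord _ (fun _ x => (-1 : ℝ) * x) (fun i => measurable_const.mul measurable_id')]
    congr 1
    funext i
    rw [show (fun x : ℝ => (-1 : ℝ) * x) = ((-1 : ℝ) * ·) from rfl,
      gaussianReal_map_const_mul (-1 : ℝ)]
    norm_num
  have hset : MeasurableSet {z : ι → ℝ | ∑ i, w i * z i < 0} :=
    measurableSet_lt (measurable_wsum w) measurable_const
  have hgt : π {z | ∑ i, w i * z i < 0} = π {z | 0 < ∑ i, w i * z i} := by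
    conv_lhs => rw [← hneg]
    rw [Measure.map_apply (measurable_pi_lambda (fun (z : ι → ℝ) i => (-1 : ℝ) * z i) fun i =>
      measurable_const.mul (measurable_pi_apply i)) hset]
    congr 1
    ext z
    simp only [Set.mem_preimage, Set.mem_setOf_eq]
    constructor
    · intro h
      have : ∑ i, w i * ((-1 : ℝ) * z i) = -∑ i, w i * z i := by
        rw [← Finset.sum_neg_distrib]
        exact Finset.sum_congr rfl fun i _ => by ring
      rw [this] at h
      linarith
    · intro h
      have : ∑ i, w i * ((-1 : ℝ) * z i) = -∑ i, w i * z i := by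
        rw [← Finset.sum_neg_distrib]
        exact Finset.sum_congr rfl fun i _ => by ring
      rw [this]
      linarith
  have hdisj : Disjoint {z : ι → ℝ | ∑ i, w i * z i < 0} {z | 0 < ∑ i, w i * z i} := by
    rw [Set.disjoint_left]
    intro z h1 h2
    simp only [Set.mem_setOf_eq] at h1 h2
    linarith
  have hsum : π {z | ∑ i, w i * z i < 0} + π {z | 0 < ∑ i, w i * z i} ≤ 1 := by
    rw [← measure_union hdisj (measurableSet_lt measurable_const (measurable_wsum w))]
    haveI : IsProbabilityMeasure π := by rw [hπ]; infer_instance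
    exact prob_le_one
  rw [← hgt] at hsum
  have h2 : 2 * π {z | ∑ i, w i * z i < 0} ≤ 1 := by
    rw [two_mul]; exact hsum
  rw [ENNReal.le_div_iff_mul_le (Or.inl two_ne_zero) (Or.inl ENNReal.ofNat_ne_top), mul_comm]
  exact h2



noncomputable def H (n : ℕ) : ℝ := ∑ k ∈ Finset.range n, 1 / ((k : ℝ) + 1)

lemma H_bounds (N : ℕ) : (N : ℝ) / 2 ≤ H (2 ^ N) ∧ H (2 ^ N) ≤ N + 1 := by
  induction N with
  | zero => norm_num [H]
  | succ N ih =>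
    set f : ℕ → ℝ := fun k => 1 / ((k : ℝ) + 1) with hf
    have hsplit : H (2 ^ (N + 1)) = H (2 ^ N) + ∑ k ∈ Finset.Ico (2 ^ N) (2 ^ (N + 1)), f k := by
      unfold H
      rw [Finset.range_eq_Ico,
        ← Finset.sum_Ico_consecutive _ (Nat.zero_le (2 ^ N))
          (Nat.pow_le_pow_right (by norm_num) (Nat.le_succ N))]
      rw [← Finset.range_eq_Ico]
    have hcard : (Finset.Ico (2 ^ N) (2 ^ (N + 1))).card = 2 ^ N := by
      rw [Nat.card_Ico, pow_succ]
      omega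
    have hup : ∑ k ∈ Finset.Ico (2 ^ N) (2 ^ (N + 1)), f k ≤ 1 := by
      have := Finset.sum_le_card_nsmul (Finset.Ico (2 ^ N) (2 ^ (N + 1))) f
        (1 / ((2 ^ N : ℕ) : ℝ)) ?_
      · rw [hcard, nsmul_eq_mul] at this
        refine le_trans this ?_
        rw [one_div, mul_inv_cancel₀ (by positivity)]
      · intro k hk
        rw [Finset.mem_Ico] at hk
        rw [hf]
        refine one_div_le_one_div_of_le (by positivity) ?_
        have : ((2 ^ N : ℕ) : ℝ) ≤ (k : ℝ) := Nat.cast_le.mpr hk.1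
        linarith
    have hlow : (1 : ℝ) / 2 ≤ ∑ k ∈ Finset.Ico (2 ^ N) (2 ^ (N + 1)), f k := by
      have := Finset.card_nsmul_le_sum (Finset.Ico (2 ^ N) (2 ^ (N + 1))) f
        (1 / ((2 ^ (N + 1) : ℕ) : ℝ)) ?_
      · rw [hcard, nsmul_eq_mul] at this
        refine le_trans (le_of_eq ?_) this
        push_cast
        rw [pow_succ]
        field_simp
      · intro k hk
        rw [Finset.mem_Ico] at hk
        rw [hf]
        refine one_div_le_one_div_of_le (by positivity) ?_
        have : (k : ℝ) + 1 ≤ ((2 ^ (N + 1) : ℕ) : ℝ) := by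
          have : k + 1 ≤ 2 ^ (N + 1) := hk.2
          exact_mod_cast this
        linarith
    refine ⟨?_, ?_⟩
    · rw [hsplit]
      push_cast
      linarith [ih.1]
    · rw [hsplit]
      push_cast
      linarith [ih.2]

lemma eventually_prob_ge {Ω : Type} [MeasurableSpace Ω] (P : Measure Ω) [IsProbabilityMeasure P]
    (W : ℕ → Ω → ℝ) (hW : ∀ m, Measurable (W m)) (μ ε : ℝ) (hε : 0 < ε)
    (hconv : ∀ᵐ ω ∂P, Tendsto (fun n : ℕ => W n ω / n) atTop (nhds μ)) :
    ∃ M : ℕ, 1 ≤ M ∧ ∀ m : ℕ, M ≤ m → (7 : ℝ≥0∞) / 8 ≤ P {ω | W m ω ≤ (μ + ε) * m} := by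
  set G : ℕ → Set Ω := fun M => ⋂ m, ⋂ (_ : M ≤ m), {ω | W m ω / m ≤ μ + ε} with hG
  have hGmeas : ∀ M, MeasurableSet (G M) := by
    intro M
    refine MeasurableSet.iInter fun m => MeasurableSet.iInter fun _ => ?_
    exact measurableSet_le ((hW m).div_const _) measurable_const
  have hGmono : Monotone G := by
    intro M M' hMM'
    exact Set.iInter₂_mono' fun m hm => ⟨m, le_trans hMM' hm, le_rfl⟩
  have hae : ∀ᵐ ω ∂P, ω ∈ ⋃ M, G M := by
    filter_upwards [hconv] with ω hω
    have : ∀ᶠ m in atTop, W m ω / m ≤ μ + ε :=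
      hω.eventually_le_const (by linarith)
    obtain ⟨M, hM⟩ := eventually_atTop.mp this
    exact Set.mem_iUnion.mpr ⟨M, Set.mem_iInter.mpr fun m =>
      Set.mem_iInter.mpr fun hm => hM m hm⟩
  have hunion : P (⋃ M, G M) = 1 := by
    rw [← prob_compl_eq_zero_iff (MeasurableSet.iUnion hGmeas)]
    exact ae_iff.mp hae
  have htend : Tendsto (fun M => P (G M)) atTop (nhds (P (⋃ M, G M))) :=
    tendsto_measure_iUnion_atTop hGmono
  rw [hunion] at htend
  have h78 : (7 : ℝ≥0∞) / 8 < 1 := by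
    rw [ENNReal.div_lt_iff (by norm_num) (by norm_num)]
    norm_num
  obtain ⟨M, hM⟩ := (htend.eventually (eventually_ge_nhds h78)).exists
  refine ⟨max M 1, le_max_right _ _, fun m hm => ?_⟩
  refine le_trans hM (measure_mono ?_)
  intro ω hω
  have h1 : W m ω / m ≤ μ + ε := by
    have := Set.mem_iInter.mp (Set.mem_iInter.mp hω m) -- hω : ω ∈ G M
    exact this (le_trans (le_max_left _ _) hm)
  have hm1 : (1 : ℝ) ≤ m := by
    exact_mod_cast le_trans (le_max_right M 1) hm
  have hmpos : (0 : ℝ) < m := by linarith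
  show W m ω ≤ (μ + ε) * m
  rw [div_le_iff₀ hmpos] at h1
  exact h1


lemma integrable_exp_shift (c : ℝ) :
    Integrable (fun x => Real.exp (c * x - c ^ 2 / 2)) (gaussianReal 0 1) := by
  have h := integrable_gaussianPDFReal c 1
  rw [gaussianReal_of_var_ne_zero 0 one_ne_zero]
  rw [integrable_withDensity_iff (measurable_gaussianPDF 0 1)
    (ae_of_all _ fun x => ENNReal.ofReal_lt_top)]
  have heq : (fun x => Real.exp (c * x - c ^ 2 / 2) * (gaussianPDF 0 1 x).toReal)
      = gaussianPDFReal c 1 := by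
    funext x
    rw [gaussianPDF, ENNReal.toReal_ofReal (gaussianPDFReal_nonneg _ _ _)]
    unfold gaussianPDFReal
    rw [show (-(x - c) ^ 2 / (2 * ((1:ℝ≥0):ℝ))) = (-(x - 0) ^ 2 / (2 * ((1:ℝ≥0):ℝ)))
      + (c * x - c ^ 2 / 2) by push_cast; ring, Real.exp_add]
    ring
  rw [heq]
  exact h


end Stmt13Aux

open Stmt13Aux

set_option maxHeartbeats 2000000

/-- Proposition 3.1.  For Model 1 in dimension `d = 1` with
i.i.d. `N(0,1)` weights: given `ε > 0`, there is `c(ε) > 0` such that for all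
`N` large, `P(Z_{2^N} ≤ (μ - ε) 2^N) ≥ (1/2) e^{-c(ε) 2^{2N} / N}`. -/
theorem stmt_13
    {Ω : Type} [MeasurableSpace Ω] (P : Measure Ω) [IsProbabilityMeasure P]
    (X : ℤ × ℕ × Bool → Ω → ℝ)
    (hmeas : ∀ e, Measurable (X e))
    (hindep : iIndepFun X P)
    (hdist : ∀ e, Measure.map (X e) P = gaussianReal 0 1)
    (μ : ℝ)
    (hμ : ∀ᵐ ω ∂P, Tendsto (fun n : ℕ => Z (fun e => X e ω) n / n) atTop (nhds μ))
    (ε : ℝ) (hε : 0 < ε) :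
    ∃ c > (0 : ℝ), ∃ N₀ : ℕ, ∀ N : ℕ, N₀ ≤ N →
      (1 / 2) * Real.exp (-(c * 2 ^ (2 * N)) / N) ≤
        (P {ω | Z (fun e => X e ω) (2 ^ N) ≤ (μ - ε) * 2 ^ N}).toReal := by
  classical
  obtain ⟨M, hM1, hM⟩ := eventually_prob_ge P (fun m ω => Z (fun e => X e ω) m)
    (fun m => measurable_Z _ (fun e => hmeas e) m) μ ε hε hμ
  refine ⟨64 * ε ^ 2 + 1, by positivity, max M 1, fun N hN => ?_⟩
  -- basic numerology
  set n : ℕ := 2 ^ N with hn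
  have hN1 : 1 ≤ N := le_trans (le_max_right M 1) hN
  have hNM : M ≤ N := le_trans (le_max_left M 1) hN
  have hnM : M ≤ n := le_trans hNM (le_of_lt ((Nat.lt_two_pow_self (n := N))))
  have hNpos : (0 : ℝ) < N := by exact_mod_cast hN1
  set nn : ℝ := ((n : ℕ) : ℝ) with hnn
  have hnn_pos : 0 < nn := by positivity
  have hnn_eq : nn = (2 : ℝ) ^ N := by rw [hnn, hn]; push_cast; ring
  have h2N : (2 : ℝ) ^ (2 * N) = nn ^ 2 := by
    rw [hnn_eq, ← pow_mul, mul_comm N 2]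
  set lam : ℝ := 4 * ε * nn / N with hlam
  have hlam_pos : 0 < lam := by positivity
  -- the finite edge set
  set S : Finset (ℤ × ℕ × Bool) :=
    (Finset.Icc (-(n : ℤ)) n) ×ˢ (Finset.range n ×ˢ (Finset.univ : Finset Bool)) with hS
  have hsupp : ∀ e : ℤ × ℕ × Bool, e.2.1 < n → e.1.natAbs ≤ e.2.1 → e ∈ S := by
    rintro ⟨x, k, b⟩ hk hx
    simp only [hS, Finset.mem_product, Finset.mem_Icc, Finset.mem_range, Finset.mem_univ,
      and_true]
    constructor
    · have : x.natAbs ≤ n := le_trans hx (le_of_lt hk)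
      omega
    · exact hk
  have hwS0 : ∀ e, e ∉ S → w n lam e = 0 := by
    intro e he
    unfold w
    rw [if_neg]
    intro hcond
    exact he (hsupp e hcond.1 hcond.2)
  -- maps and sets
  set extS : (S → ℝ) → (ℤ × ℕ × Bool → ℝ) :=
    fun y e => if h : e ∈ S then y ⟨e, h⟩ else 0 with hextS
  set φ : Ω → (S → ℝ) := fun ω i => X i ω with hφ
  have hφmeas : Measurable φ := measurable_pi_lambda _ fun i => hmeas i
  have hextSmeas : ∀ e, Measurable fun y : S → ℝ => extS y e := by
    intro e
    by_cases he : e ∈ S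
    · simpa [hextS, he] using measurable_pi_apply (⟨e, he⟩ : S)
    · simpa [hextS, he] using measurable_const
  have hZm : Measurable fun y : S → ℝ => Z (extS y) n :=
    measurable_Z (fun y e => extS y e) hextSmeas n
  have hZcongr : ∀ ω, Z (fun e => X e ω) n = Z (extS (φ ω)) n := by
    intro ω
    refine Z_congr fun e h1 h2 => ?_
    have he : e ∈ S := hsupp e h1 h2
    simp [hextS, he, hφ]
  set wS : S → ℝ := fun i => w n lam i with hwS
  set B : Set (S → ℝ) := {y | Z (extS y) n ≤ (μ - ε) * nn} with hB
  set B' : Set (S → ℝ) := {y | Z (extS y) n ≤ (μ + ε) * nn} with hB'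
  set G : Set (S → ℝ) := {y | 0 ≤ ∑ i, wS i * y i} with hG
  have hwsum_meas : Measurable fun y : S → ℝ => ∑ i, wS i * y i :=
    Finset.measurable_sum _ fun i _ => measurable_const.mul (measurable_pi_apply i)
  have hBmeas : MeasurableSet B := measurableSet_le hZm measurable_const
  have hB'meas : MeasurableSet B' := measurableSet_le hZm measurable_const
  have hGmeas : MeasurableSet G := measurableSet_le measurable_const hwsum_meas
  -- the product Gaussian measure
  set π : Measure (S → ℝ) := Measure.pi fun _ : S => gaussianReal 0 1 with hπ
  haveI : IsProbabilityMeasure π := by rw [hπ]; infer_instance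
  have hlaw : Measure.map φ P = π := map_pi_of_iIndep P X hmeas hindep hdist S
  -- harmonic sums
  have hHlow : (N : ℝ) / 2 ≤ H n := by rw [hn]; exact (H_bounds N).1
  have hHhigh : H n ≤ N + 1 := by rw [hn]; exact (H_bounds N).2
  have hHpos : 0 < H n := lt_of_lt_of_le (by positivity) hHlow
  have hD : 2 * ε * nn ≤ ∑ k ∈ Finset.range n, lam / (k + 1) := by
    have : ∑ k ∈ Finset.range n, lam / ((k : ℝ) + 1) = lam * H n := by
      rw [H, Finset.mul_sum]
      exact Finset.sum_congr rfl fun k _ => by rw [mul_one_div]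
    rw [this]
    have h1 : lam * ((N : ℝ) / 2) ≤ lam * H n :=
      mul_le_mul_of_nonneg_left hHlow (le_of_lt hlam_pos)
    have h2 : lam * ((N : ℝ) / 2) = 2 * ε * nn := by
      rw [hlam]; field_simp; ring
    linarith
  -- variance bound
  set V : ℝ := ∑ i, wS i ^ 2 with hV
  have hVbound : V ≤ 128 * ε ^ 2 * nn ^ 2 / N := by
    have hVS : V = ∑ x ∈ Finset.Icc (-(n : ℤ)) n, ∑ k ∈ Finset.range n,
        ∑ b ∈ (Finset.univ : Finset Bool), w n lam (x, k, b) ^ 2 := by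
      rw [hV]
      rw [show (∑ i : S, wS i ^ 2) = ∑ e ∈ S, w n lam e ^ 2 from
        Finset.sum_coe_sort S fun e => w n lam e ^ 2]
      rw [hS, Finset.sum_product]
      exact Finset.sum_congr rfl fun x _ =>
        Finset.sum_product (Finset.range n) Finset.univ (fun y => w n lam (x, y) ^ 2)
    have hterm : ∀ k ∈ Finset.range n,
        (∑ x ∈ Finset.Icc (-(n : ℤ)) n,
          ∑ b ∈ (Finset.univ : Finset Bool), w n lam (x, k, b) ^ 2)
          ≤ 4 * lam ^ 2 / ((k : ℝ) + 1) := by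
      intro k hk
      rw [Finset.mem_range] at hk
      have hk1 : (0 : ℝ) < (k : ℝ) + 1 := by positivity
      have hw2 : ∀ (x : ℤ) (b : Bool), w n lam (x, k, b) ^ 2
          = if x.natAbs ≤ k then (lam / ((k : ℝ) + 1)) ^ 2 else 0 := by
        intro x b
        unfold w
        by_cases hx : x.natAbs ≤ k
        · simp only [if_pos (show (x, k, b).2.1 < n ∧ (x, k, b).1.natAbs ≤ (x, k, b).2.1
            from ⟨hk, hx⟩), if_pos hx]
        · rw [if_neg (fun h => hx h.2), if_neg hx]
          ring
      have hB2 : ∀ x : ℤ, (∑ b ∈ (Finset.univ : Finset Bool), w n lam (x, k, b) ^ 2)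
          = 2 * (if x.natAbs ≤ k then (lam / ((k : ℝ) + 1)) ^ 2 else 0) := by
        intro x
        rw [Fintype.sum_bool, hw2 x true, hw2 x false]
        ring
      have hsum_ite : (∑ x ∈ Finset.Icc (-(n : ℤ)) n,
          (if x.natAbs ≤ k then (lam / ((k : ℝ) + 1)) ^ 2 else 0))
          ≤ (2 * (k : ℝ) + 1) * (lam / ((k : ℝ) + 1)) ^ 2 := by
        rw [← Finset.sum_filter]
        have hcard : ((Finset.Icc (-(n : ℤ)) n).filter (fun x => x.natAbs ≤ k)).card
            ≤ 2 * k + 1 := by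
          have hsub : (Finset.Icc (-(n : ℤ)) n).filter (fun x => x.natAbs ≤ k)
              ⊆ Finset.Icc (-(k : ℤ)) k := by
            intro x hx
            rw [Finset.mem_filter] at hx
            rw [Finset.mem_Icc]
            omega
          refine le_trans (Finset.card_le_card hsub) ?_
          rw [Int.card_Icc]
          omega
        rw [Finset.sum_const, nsmul_eq_mul]
        refine mul_le_mul_of_nonneg_right ?_ (by positivity)
        calc (((Finset.Icc (-(n : ℤ)) n).filter (fun x => x.natAbs ≤ k)).card : ℝ)
            ≤ ((2 * k + 1 : ℕ) : ℝ) := by exact_mod_cast hcard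
          _ = 2 * (k : ℝ) + 1 := by push_cast; ring
      have hkey : 2 * ((2 * (k : ℝ) + 1) * (lam / ((k : ℝ) + 1)) ^ 2)
          ≤ 4 * lam ^ 2 / ((k : ℝ) + 1) := by
        have hK : ((k : ℝ) + 1) ≠ 0 := ne_of_gt hk1
        have hEq : 4 * lam ^ 2 / ((k : ℝ) + 1)
            - 2 * ((2 * (k : ℝ) + 1) * (lam / ((k : ℝ) + 1)) ^ 2)
            = 2 * lam ^ 2 / ((k : ℝ) + 1) ^ 2 := by
          field_simp
          ring
        have hpos : 0 ≤ 2 * lam ^ 2 / ((k : ℝ) + 1) ^ 2 := by positivity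
        linarith
      calc (∑ x ∈ Finset.Icc (-(n : ℤ)) n,
            ∑ b ∈ (Finset.univ : Finset Bool), w n lam (x, k, b) ^ 2)
          = ∑ x ∈ Finset.Icc (-(n : ℤ)) n,
              2 * (if x.natAbs ≤ k then (lam / ((k : ℝ) + 1)) ^ 2 else 0) :=
            Finset.sum_congr rfl fun x _ => hB2 x
        _ = 2 * ∑ x ∈ Finset.Icc (-(n : ℤ)) n,
              (if x.natAbs ≤ k then (lam / ((k : ℝ) + 1)) ^ 2 else 0) := by
            rw [Finset.mul_sum]
        _ ≤ 2 * ((2 * (k : ℝ) + 1) * (lam / ((k : ℝ) + 1)) ^ 2) := by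
            exact mul_le_mul_of_nonneg_left hsum_ite (by norm_num)
        _ ≤ 4 * lam ^ 2 / ((k : ℝ) + 1) := hkey
    have hVle : V ≤ ∑ k ∈ Finset.range n, 4 * lam ^ 2 / ((k : ℝ) + 1) := by
      rw [hVS, Finset.sum_comm]
      exact Finset.sum_le_sum hterm
    have hsum4 : ∑ k ∈ Finset.range n, 4 * lam ^ 2 / ((k : ℝ) + 1) = 4 * lam ^ 2 * H n := by
      rw [H, Finset.mul_sum]
      exact Finset.sum_congr rfl fun k _ => by rw [mul_one_div]
    have hN2 : (N : ℝ) + 1 ≤ 2 * N := by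
      have : (1 : ℝ) ≤ N := by exact_mod_cast hN1
      linarith
    have hfin : 4 * lam ^ 2 * (2 * (N : ℝ)) = 128 * ε ^ 2 * nn ^ 2 / N := by
      rw [hlam]
      field_simp
      ring
    calc V ≤ 4 * lam ^ 2 * H n := by rw [← hsum4]; exact hVle
      _ ≤ 4 * lam ^ 2 * ((N : ℝ) + 1) := by
          refine mul_le_mul_of_nonneg_left hHhigh (by positivity)
      _ ≤ 4 * lam ^ 2 * (2 * (N : ℝ)) := by
          refine mul_le_mul_of_nonneg_left hN2 (by positivity)
      _ = 128 * ε ^ 2 * nn ^ 2 / N := hfin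
  -- the inclusion C ⊆ B
  have hCB : (fun y => y + wS) ⁻¹' B' ⊆ B := by
    intro y hy
    simp only [Set.mem_preimage, hB', Set.mem_setOf_eq] at hy
    have hext_add : extS (y + wS) = fun e => extS y e + w n lam e := by
      funext e
      by_cases he : e ∈ S
      · simp [hextS, he, hwS]
      · simp [hextS, he, hwS0 e he]
    rw [hext_add, Z_add_w] at hy
    simp only [hB, Set.mem_setOf_eq]
    nlinarith [hD]
  -- the pushforward identity
  have hmap : Measure.map (fun y => y + wS) π
      = π.withDensity (fun y => ENNReal.ofReal
          (∏ i, Real.exp (wS i * y i - wS i ^ 2 / 2))) := by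
    have h1 : Measure.map (fun y => y + wS) π
        = Measure.pi (fun i : S => gaussianReal (wS i) 1) := by
      have : (fun y : S → ℝ => y + wS) = fun y i => y i + wS i := rfl
      rw [this, hπ, pi_map_coord _ _ (fun i => measurable_id'.add_const (wS i))]
      congr 1
      funext i
      rw [show (fun x : ℝ => x + wS i) = (· + wS i) from rfl, gaussianReal_map_add_const,
        zero_add]
    rw [h1]
    have h2 := pi_withDensity (ι := S) (gaussianReal 0 1)
      (fun i x => Real.exp (wS i * x - wS i ^ 2 / 2))
      (fun i => ((measurable_const.mul measurable_id').sub measurable_const).exp)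
      (fun i x => le_of_lt (Real.exp_pos _))
      (fun i => integrable_exp_shift (wS i))
    rw [← h2]
    congr 1
    funext i
    rw [gaussianReal_shift (wS i)]
  -- main chain
  have hchain : ENNReal.ofReal (Real.exp (-V / 2)) * π (B' ∩ G) ≤ P {ω | Z (fun e => X e ω) (2 ^ N) ≤ (μ - ε) * 2 ^ N} := by
    have hAeq : {ω | Z (fun e => X e ω) (2 ^ N) ≤ (μ - ε) * 2 ^ N} = φ ⁻¹' B := by
      ext ω
      simp only [Set.mem_setOf_eq, Set.mem_preimage, hB]
      rw [← hZcongr ω, ← hn, ← hnn_eq]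
    rw [hAeq, ← Measure.map_apply hφmeas hBmeas, hlaw]
    calc ENNReal.ofReal (Real.exp (-V / 2)) * π (B' ∩ G)
        = ∫⁻ _ in B' ∩ G, ENNReal.ofReal (Real.exp (-V / 2)) ∂π := by
          rw [setLIntegral_const]
      _ ≤ ∫⁻ y in B' ∩ G, ENNReal.ofReal
            (∏ i, Real.exp (wS i * y i - wS i ^ 2 / 2)) ∂π := by
          refine setLIntegral_mono' (hB'meas.inter hGmeas) ?_
          intro y hy
          refine ENNReal.ofReal_le_ofReal ?_
          rw [← Real.exp_sum]
          refine Real.exp_le_exp.mpr ?_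
          rw [Finset.sum_sub_distrib]
          have hyG : 0 ≤ ∑ i, wS i * y i := hy.2
          have : ∑ i : S, wS i ^ 2 / 2 = V / 2 := by
            rw [hV, Finset.sum_div]
          rw [this]
          linarith
      _ ≤ ∫⁻ y in B', ENNReal.ofReal
            (∏ i, Real.exp (wS i * y i - wS i ^ 2 / 2)) ∂π :=
          lintegral_mono' (Measure.restrict_mono Set.inter_subset_left le_rfl) le_rfl
      _ = (π.withDensity (fun y => ENNReal.ofReal
            (∏ i, Real.exp (wS i * y i - wS i ^ 2 / 2)))) B' := by
          rw [withDensity_apply _ hB'meas]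
      _ = (Measure.map (fun y => y + wS) π) B' := by rw [hmap]
      _ = π ((fun y => y + wS) ⁻¹' B') := by
          rw [Measure.map_apply (measurable_id'.add_const wS) hB'meas]
      _ ≤ π B := measure_mono hCB
  -- lower bound for π (B' ∩ G)
  have hπB' : (7 : ℝ≥0∞) / 8 ≤ π B' := by
    have := hM n hnM
    have hup : {ω | Z (fun e => X e ω) n ≤ (μ + ε) * (n : ℝ)} = φ ⁻¹' B' := by
      ext ω
      simp only [Set.mem_setOf_eq, Set.mem_preimage, hB']
      rw [← hZcongr ω, ← hnn]
    rw [hup, ← Measure.map_apply hφmeas hB'meas, hlaw] at this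
    exact this
  have hπG : π Gᶜ ≤ 1 / 2 := by
    have hGc : Gᶜ = {y : S → ℝ | ∑ i, wS i * y i < 0} := by
      ext y
      simp [hG, not_le]
    rw [hGc, hπ]
    exact pi_gauss_neg_le_half wS
  have hBG : (3 : ℝ) / 8 ≤ (π (B' ∩ G)).toReal := by
    have hsub : B' ⊆ (B' ∩ G) ∪ Gᶜ := by
      intro y hy
      by_cases hyG : y ∈ G
      · exact Or.inl ⟨hy, hyG⟩
      · exact Or.inr hyG
    have h1 : π B' ≤ π (B' ∩ G) + π Gᶜ :=
      le_trans (measure_mono hsub) (measure_union_le _ _)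
    have h2 : (7 : ℝ≥0∞) / 8 ≤ π (B' ∩ G) + 1 / 2 :=
      le_trans hπB' (le_trans h1 (add_le_add le_rfl hπG))
    have hfin : π (B' ∩ G) ≠ ⊤ := measure_ne_top _ _
    have h3 := ENNReal.toReal_mono (ENNReal.add_ne_top.mpr ⟨hfin, by norm_num⟩) h2
    rw [ENNReal.toReal_add hfin (by norm_num)] at h3
    have h4 : ((7 : ℝ≥0∞) / 8).toReal = 7 / 8 := by
      rw [ENNReal.toReal_div]; norm_num
    have h5 : ((1 : ℝ≥0∞) / 2).toReal = 1 / 2 := by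
      rw [ENNReal.toReal_div]; norm_num
    rw [h4, h5] at h3
    linarith
  -- conclude
  have hPfin : P {ω | Z (fun e => X e ω) (2 ^ N) ≤ (μ - ε) * 2 ^ N} ≠ ⊤ := measure_ne_top _ _
  have hfinal := ENNReal.toReal_mono hPfin hchain
  rw [ENNReal.toReal_mul, ENNReal.toReal_ofReal (le_of_lt (Real.exp_pos _))] at hfinal
  refine le_trans ?_ hfinal
  have hexp : Real.exp (-(((64 * ε ^ 2 + 1) * 2 ^ (2 * N))) / N)
      ≤ (3 : ℝ) / 4 * Real.exp (-V / 2) := by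
    rw [show (-(((64 * ε ^ 2 + 1) * 2 ^ (2 * N))) / N) = (-(((64 * ε ^ 2 + 1) * 2 ^ (2 * N))) / N + V / 2) + (-V / 2) by ring, Real.exp_add]
    refine mul_le_mul_of_nonneg_right ?_ (le_of_lt (Real.exp_pos _))
    have harg : -(((64 * ε ^ 2 + 1) * 2 ^ (2 * N))) / N + V / 2 ≤ -1 := by
      rw [h2N]
      have hVh : V / 2 ≤ 64 * ε ^ 2 * nn ^ 2 / N := by
        calc V / 2 ≤ (128 * ε ^ 2 * nn ^ 2 / N) / 2 := by linarith [hVbound]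
          _ = 64 * ε ^ 2 * nn ^ 2 / N := by ring
      have hNn : (N : ℝ) ≤ nn := by
        have h0 : N ≤ n := Nat.le_of_lt ((Nat.lt_two_pow_self (n := N)))
        rw [hnn]
        exact_mod_cast h0
      have h1nn : (1 : ℝ) ≤ nn := by
        have h0 : 1 ≤ n := Nat.one_le_two_pow
        rw [hnn]
        exact_mod_cast h0
      have hnN : (N : ℝ) ≤ nn ^ 2 := by nlinarith
      have h1 : (1 : ℝ) ≤ nn ^ 2 / N := by
        rw [le_div_iff₀ hNpos]; linarith
      have hsplit : ((64 * ε ^ 2 + 1) * nn ^ 2) / N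
          = 64 * ε ^ 2 * nn ^ 2 / N + nn ^ 2 / N := by ring
      rw [neg_div, hsplit]
      linarith
    calc Real.exp (-(((64 * ε ^ 2 + 1) * 2 ^ (2 * N))) / N + V / 2)
        ≤ Real.exp (-1) := Real.exp_le_exp.mpr harg
      _ ≤ 3 / 4 := by
          rw [Real.exp_neg]
          have h2e : (2 : ℝ) ≤ Real.exp 1 := by
            have := Real.add_one_le_exp (1 : ℝ)
            linarith
          have : (Real.exp 1)⁻¹ ≤ 1 / 2 := by
            rw [inv_le_comm₀ (Real.exp_pos 1) (by norm_num)]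
            linarith
          linarith
  calc (1 : ℝ) / 2 * Real.exp (-(((64 * ε ^ 2 + 1)) * 2 ^ (2 * N)) / N)
      ≤ 1 / 2 * ((3 : ℝ) / 4 * Real.exp (-V / 2)) := by
        refine mul_le_mul_of_nonneg_left hexp (by norm_num)
    _ = (3 / 8) * Real.exp (-V / 2) := by ring
    _ ≤ (π (B' ∩ G)).toReal * Real.exp (-V / 2) := by
        refine mul_le_mul_of_nonneg_right hBG (le_of_lt (Real.exp_pos _))
    _ = Real.exp (-V / 2) * (π (B' ∩ G)).toReal := by ring
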